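/- Let h: 𝒟 → ℝ, h(u) = ∑_{i=1}^n ∫_{u_i^D}^{u_i} log(s/u_i^D) ds + ∫_{u_0^D}^{1−∑_{i=1}^n u_i} log(s/u_0^D) ds, where 𝒟 = {u ∈ (0,1)^n : ∑ u_i < 1}, u^D ∈ 𝒟 is fixed, and u_0^D = 1 − ∑ u_i^D. Then h is convex on 𝒟 and ∂h/∂u_i (u) = log(u_i/u_0) − log(u_i^D/u_0^D) with u_0 = 1 − ∑_{j=1}^n u_j; moreover for all u, v ∈ 𝒟: h(u) − h(v) ≤ ∑_{i=1}^n (u_i − v_i)(log(u_i/u_0) − log(u_i^D/u_0^D)) evaluated at u (i.e., the convexity inequality h(v) ≥ h(u) + h'(u)·(v−u) holds). -/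

import Mathlib

open Finset

private lemma integral_log_div' (a x : ℝ) (ha : 0 < a) (hx : 0 < x) :
    ∫ s in a..x, Real.log (s / a) = x * Real.log (x / a) - x + a := by
  have h0 : (0 : ℝ) ∉ Set.uIcc a x := by
    intro hmem
    rcases Set.mem_uIcc.mp hmem with ⟨h1, h2⟩ | ⟨h1, h2⟩ <;> nlinarith
  have hcong : Set.EqOn (fun s => Real.log (s / a))
      (fun s => Real.log s - Real.log a) (Set.uIcc a x) := by
    intro s hs
    have hspos : 0 < s := by
      rcases Set.mem_uIcc.mp hs with ⟨h1, h2⟩ | ⟨h1, h2⟩ <;> nlinarith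
    simp [Real.log_div hspos.ne' ha.ne']
  rw [intervalIntegral.integral_congr hcong,
    intervalIntegral.integral_sub (intervalIntegral.intervalIntegrable_log h0)
      (intervalIntegrable_const), integral_log,
    intervalIntegral.integral_const, Real.log_div hx.ne' ha.ne', smul_eq_mul]
  ring

private lemma phi_ineq (a x y : ℝ) (ha : 0 < a) (hx : 0 < x) (hy : 0 < y) :
    x * Real.log (x / a) - x + a + (y - x) * Real.log (x / a)
      ≤ y * Real.log (y / a) - y + a := by
  have key : Real.log (x / y) ≤ x / y - 1 := Real.log_le_sub_one_of_pos (by positivity)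
  rw [Real.log_div hx.ne' hy.ne'] at key
  have key2 : y * (Real.log x - Real.log y) ≤ x - y := by
    have h2 := mul_le_mul_of_nonneg_left key hy.le
    have h3 : y * (x / y - 1) = x - y := by field_simp
    linarith [h3 ▸ h2]
  rw [Real.log_div hx.ne' ha.ne', Real.log_div hy.ne' ha.ne']
  nlinarith [key2]

private lemma hasDerivAt_phi (a : ℝ) (ha : 0 < a) {x : ℝ} (hx : 0 < x) :
    HasDerivAt (fun t => t * Real.log (t / a) - t + a) (Real.log (x / a)) x := by
  have hinner : HasDerivAt (fun t : ℝ => Real.log (t / a)) (1 / x) x := by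
    have h1 : HasDerivAt (fun t : ℝ => t / a) (1 / a) x := by
      simpa using (hasDerivAt_id x).div_const a
    have h2 := (Real.hasDerivAt_log (by positivity : x / a ≠ 0)).comp x h1
    refine h2.congr_deriv ?_
    field_simp
  have h3 : HasDerivAt (fun t : ℝ => t * Real.log (t / a))
      (1 * Real.log (x / a) + x * (1 / x)) x := (hasDerivAt_id x).mul hinner
  have h4 := (h3.sub (hasDerivAt_id x)).add_const a
  refine h4.congr_deriv ?_
  field_simp
  ring

theorem entropy_density_convex (n : ℕ) (uD : Fin n → ℝ) (u0D : ℝ)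
    (hD : ∀ i, 0 < uD i ∧ uD i < 1) (hDsum : (∑ i, uD i) < 1)
    (hu0D : u0D = 1 - ∑ i, uD i)
    (𝒟 : Set (Fin n → ℝ))
    (h𝒟 : 𝒟 = {u | (∀ i, 0 < u i ∧ u i < 1) ∧ (∑ i, u i) < 1})
    (h : (Fin n → ℝ) → ℝ)
    (hh : ∀ u, h u = (∑ i, ∫ s in (uD i)..(u i), Real.log (s / uD i))
        + ∫ s in u0D..(1 - ∑ i, u i), Real.log (s / u0D)) :
    ConvexOn ℝ 𝒟 h
    ∧ (∀ u ∈ 𝒟, ∀ i,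
        HasDerivAt (fun t => h (Function.update u i t))
          (Real.log (u i / (1 - ∑ j, u j)) - Real.log (uD i / u0D)) (u i))
    ∧ (∀ u ∈ 𝒟, ∀ v ∈ 𝒟,
        h v ≥ h u + ∑ i, (v i - u i) *
          (Real.log (u i / (1 - ∑ j, u j)) - Real.log (uD i / u0D))) := by
  have hu0Dpos : 0 < u0D := by rw [hu0D]; linarith
  -- closed form for h
  have hform : ∀ u : Fin n → ℝ, (∀ i, 0 < u i) → 0 < 1 - ∑ i, u i →
      h u = (∑ i, (u i * Real.log (u i / uD i) - u i + uD i))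
        + ((1 - ∑ i, u i) * Real.log ((1 - ∑ i, u i) / u0D) - (1 - ∑ i, u i) + u0D) := by
    intro u hpos hs
    rw [hh]
    congr 1
    · exact Finset.sum_congr rfl fun i _ => integral_log_div' _ _ (hD i).1 (hpos i)
    · exact integral_log_div' _ _ hu0Dpos hs
  -- facts about members of 𝒟
  have hmem : ∀ u ∈ 𝒟, (∀ i, 0 < u i) ∧ 0 < 1 - ∑ i, u i := by
    intro u hu
    rw [h𝒟] at hu
    exact ⟨fun i => (hu.1 i).1, by linarith [hu.2]⟩
  -- the gradient inequality (part 3)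
  have grad : ∀ u ∈ 𝒟, ∀ v ∈ 𝒟,
      h v ≥ h u + ∑ i, (v i - u i) *
        (Real.log (u i / (1 - ∑ j, u j)) - Real.log (uD i / u0D)) := by
    intro u hu v hv
    obtain ⟨hupos, hu0⟩ := hmem u hu
    obtain ⟨hvpos, hv0⟩ := hmem v hv
    rw [hform u hupos hu0, hform v hvpos hv0]
    have hsum : ∀ i ∈ Finset.univ,
        u i * Real.log (u i / uD i) - u i + uD i
          + (v i - u i) * Real.log (u i / uD i)
        ≤ v i * Real.log (v i / uD i) - v i + uD i :=
      fun i _ => phi_ineq (uD i) (u i) (v i) (hD i).1 (hupos i) (hvpos i)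
    have h1 := Finset.sum_le_sum hsum
    have h2 := phi_ineq u0D (1 - ∑ i, u i) (1 - ∑ i, v i) hu0Dpos hu0 hv0
    rw [Finset.sum_add_distrib] at h1
    have hrw : ∀ i, (v i - u i) *
        (Real.log (u i / (1 - ∑ j, u j)) - Real.log (uD i / u0D))
        = (v i - u i) * Real.log (u i / uD i)
          - (v i - u i) * Real.log ((1 - ∑ j, u j) / u0D) := by
      intro i
      rw [Real.log_div (hupos i).ne' (ne_of_gt hu0),
        Real.log_div (hD i).1.ne' hu0Dpos.ne',
        Real.log_div (hupos i).ne' (hD i).1.ne',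
        Real.log_div (ne_of_gt hu0) hu0Dpos.ne']
      ring
    have hsub : ((1 - ∑ i, v i) - (1 - ∑ i, u i))
        = - ∑ i, (v i - u i) := by
      rw [Finset.sum_sub_distrib]; ring
    rw [hsub, neg_mul] at h2
    have hgoal : ∑ i, (v i - u i) *
        (Real.log (u i / (1 - ∑ j, u j)) - Real.log (uD i / u0D))
        = (∑ i, (v i - u i) * Real.log (u i / uD i))
          - (∑ i, (v i - u i)) * Real.log ((1 - ∑ j, u j) / u0D) := by
      rw [Finset.sum_mul, ← Finset.sum_sub_distrib]
      exact Finset.sum_congr rfl fun i _ => hrw i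
    rw [hgoal]
    linarith
  -- convexity of the set
  have hDconv : Convex ℝ 𝒟 := by
    have h1 : ∀ i : Fin n, IsLinearMap ℝ (fun u : Fin n → ℝ => u i) :=
      fun i => ⟨fun _ _ => rfl, fun _ _ => rfl⟩
    have h2 : IsLinearMap ℝ (fun u : Fin n → ℝ => ∑ i, u i) :=
      ⟨fun x y => Finset.sum_add_distrib, fun c x => by simp [Finset.mul_sum]⟩
    have hset : 𝒟 = (⋂ i, ({u : Fin n → ℝ | 0 < u i} ∩ {u | u i < 1}))
        ∩ {u : Fin n → ℝ | ∑ i, u i < 1} := by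
      rw [h𝒟]; ext u
      simp only [Set.mem_setOf_eq, Set.mem_inter_iff, Set.mem_iInter, forall_and]
    rw [hset]
    exact ((convex_iInter fun i =>
      (convex_halfSpace_gt (h1 i) 0).inter (convex_halfSpace_lt (h1 i) 1))).inter
      (convex_halfSpace_lt h2 1)
  -- convexity of h from the gradient inequality
  have hconv : ConvexOn ℝ 𝒟 h := by
    refine ⟨hDconv, ?_⟩
    intro x hx y hy a b ha hb hab
    set w := a • x + b • y with hw
    have hwmem : w ∈ 𝒟 := hDconv hx hy ha hb hab
    have g1 := grad w hwmem x hx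
    have g2 := grad w hwmem y hy
    have hzero : a * (∑ i, (x i - w i) *
          (Real.log (w i / (1 - ∑ j, w j)) - Real.log (uD i / u0D)))
        + b * (∑ i, (y i - w i) *
          (Real.log (w i / (1 - ∑ j, w j)) - Real.log (uD i / u0D))) = 0 := by
      rw [Finset.mul_sum, Finset.mul_sum, ← Finset.sum_add_distrib]
      apply Finset.sum_eq_zero
      intro i _
      have hwi : w i = a * x i + b * y i := rfl
      have hz : a * (x i - w i) + b * (y i - w i) = 0 := by
        rw [hwi]
        have hb' : b = 1 - a := by linarith
        rw [hb']; ring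
      linear_combination (Real.log (w i / (1 - ∑ j, w j)) - Real.log (uD i / u0D)) * hz
    have e1 := mul_le_mul_of_nonneg_left g1 ha
    have e2 := mul_le_mul_of_nonneg_left g2 hb
    have e3 : a * h w + b * h w = h w := by rw [← add_mul, hab, one_mul]
    simp only [smul_eq_mul]
    linarith [e1, e2, e3, hzero]
  -- derivative (part 2)
  have hderiv : ∀ u ∈ 𝒟, ∀ i,
      HasDerivAt (fun t => h (Function.update u i t))
        (Real.log (u i / (1 - ∑ j, u j)) - Real.log (uD i / u0D)) (u i) := by
    intro u hu i
    obtain ⟨hupos, hu0⟩ := hmem u hu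
    set S : ℝ := ∑ j ∈ Finset.univ.erase i, u j with hS
    have hSnonneg : 0 ≤ S := Finset.sum_nonneg fun j _ => (hupos j).le
    have hsumsplit : ∀ t : ℝ, ∑ j, Function.update u i t j = t + S := by
      intro t
      rw [← Finset.add_sum_erase _ _ (Finset.mem_univ i), Function.update_self]
      congr 1
      exact Finset.sum_congr rfl fun j hj =>
        Function.update_of_ne (Finset.ne_of_mem_erase hj) _ _
    have husum : ∑ j, u j = u i + S := by
      rw [← Finset.add_sum_erase _ _ (Finset.mem_univ i)]
    -- closed form on a neighborhood
    set ψ : ℝ → ℝ := fun t =>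
      (t * Real.log (t / uD i) - t + uD i)
      + (∑ j ∈ Finset.univ.erase i, (u j * Real.log (u j / uD j) - u j + uD j))
      + ((1 - (t + S)) * Real.log ((1 - (t + S)) / u0D) - (1 - (t + S)) + u0D)
      with hψ
    have hev : ψ =ᶠ[nhds (u i)] (fun t => h (Function.update u i t)) := by
      have hmem' : Set.Ioo (0 : ℝ) (1 - S) ∈ nhds (u i) := by
        apply Ioo_mem_nhds (hupos i)
        have : (1 : ℝ) - ∑ j, u j > 0 := hu0
        rw [husum] at this; linarith
      filter_upwards [hmem'] with t ht
      have htpos : 0 < t := ht.1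
      have hpos' : ∀ j, 0 < Function.update u i t j := by
        intro j
        rcases eq_or_ne j i with rfl | hne
        · rw [Function.update_self]; exact htpos
        · rw [Function.update_of_ne hne]; exact hupos j
      have hs' : 0 < 1 - ∑ j, Function.update u i t j := by
        rw [hsumsplit]; linarith [ht.2]
      rw [hform _ hpos' hs', hsumsplit]
      have hsplit : ∑ j, (Function.update u i t j
            * Real.log (Function.update u i t j / uD j)
            - Function.update u i t j + uD j)
          = (t * Real.log (t / uD i) - t + uD i)
            + ∑ j ∈ Finset.univ.erase i,
              (u j * Real.log (u j / uD j) - u j + uD j) := by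
        rw [← Finset.add_sum_erase _ _ (Finset.mem_univ i), Function.update_self]
        congr 1
        refine Finset.sum_congr rfl fun j hj => ?_
        rw [Function.update_of_ne (Finset.ne_of_mem_erase hj)]
      rw [hsplit, hψ]
    have hψderiv : HasDerivAt ψ
        (Real.log (u i / (1 - ∑ j, u j)) - Real.log (uD i / u0D)) (u i) := by
      have hu0' : 0 < 1 - (u i + S) := by
        rw [← husum]; exact hu0
      have d1 := hasDerivAt_phi (uD i) (hD i).1 (hupos i)
      have dinner : HasDerivAt (fun t : ℝ => 1 - (t + S)) (-1) (u i) := by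
        have : (fun t : ℝ => 1 - (t + S)) = (fun t : ℝ => (1 - S) - t) := by
          funext t; ring
        rw [this]
        simpa using (hasDerivAt_id (u i)).const_sub (1 - S)
      have d2 := (hasDerivAt_phi u0D hu0Dpos hu0').comp (u i) dinner
      have d3 := (d1.add_const
        (∑ j ∈ Finset.univ.erase i, (u j * Real.log (u j / uD j) - u j + uD j))).add d2
      refine d3.congr_deriv ?_
      rw [← husum]
      rw [Real.log_div (hupos i).ne' (ne_of_gt hu0),
        Real.log_div (hD i).1.ne' hu0Dpos.ne',
        Real.log_div (hupos i).ne' (hD i).1.ne',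
        Real.log_div (ne_of_gt hu0) hu0Dpos.ne']
      ring
    exact hψderiv.congr_of_eventuallyEq hev.symm
  exact ⟨hconv, hderiv, grad⟩
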